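/- Let (ω_m) be a sequence of positive real numbers with ω_m → ∞, and let z_m = a_m - i·b_m be a sequence of complex numbers with a_m ≥ 0 and b_m ≥ 0. Suppose there exist constants c₁ > 0 and c₂ > 0 such that b_m ≥ c₁·ω_m and b_m ≥ c₂·a_m for all m. Then there exists M such that for all m ≥ M, one has (ω_m - z_m) ≠ e^{-i z_m}·(ω_m + z_m) and (ω_m - z_m) ≠ -e^{-i z_m}·(ω_m + z_m); that is, z_m does not solve the equation (ω - z)/(ω + z) = ± e^{-iz} with ω = ω_m for sufficiently large m. -/

import Mathlib

theorem not_root_for_large_m (ω a b : ℕ → ℝ) (hωpos : ∀ m, 0 < ω m)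
    (hω : Filter.Tendsto ω Filter.atTop Filter.atTop)
    (ha : ∀ m, 0 ≤ a m) (hb : ∀ m, 0 ≤ b m)
    (z : ℕ → ℂ) (hz : ∀ m, z m = (a m : ℂ) - (b m : ℂ) * Complex.I)
    (c₁ c₂ : ℝ) (hc₁ : 0 < c₁) (hc₂ : 0 < c₂)
    (hbc₁ : ∀ m, c₁ * ω m ≤ b m) (hbc₂ : ∀ m, c₂ * a m ≤ b m) :
    ∃ M : ℕ, ∀ m, M ≤ m →
      ((ω m : ℂ) - z m ≠ Complex.exp (-Complex.I * z m) * ((ω m : ℂ) + z m)) ∧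
      ((ω m : ℂ) - z m ≠ -Complex.exp (-Complex.I * z m) * ((ω m : ℂ) + z m)) := by
  obtain ⟨C, hCdef⟩ : ∃ C : ℝ, C = 1 / c₁ + 1 / c₂ + 1 := ⟨_, rfl⟩
  have hCpos : 0 < C := by rw [hCdef]; positivity
  have h1c : 0 < 1 / c₁ := by positivity
  have h2c : 0 < 1 / c₂ := by positivity
  have hC1 : (1 : ℝ) ≤ C := by rw [hCdef]; linarith
  obtain ⟨M, hM⟩ := (Filter.tendsto_atTop.mp hω ((Real.log C + 1) / c₁)).exists_forall_of_atTop
  refine ⟨M, fun m hm => ?_⟩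
  have hωm := hM m hm
  have hbm : Real.log C + 1 ≤ b m := by
    have := hbc₁ m
    have : c₁ * ((Real.log C + 1) / c₁) ≤ c₁ * ω m :=
      mul_le_mul_of_nonneg_left hωm hc₁.le
    rw [mul_div_cancel₀ _ hc₁.ne'] at this
    linarith [hbc₁ m]
  have hlogC : 0 ≤ Real.log C := Real.log_nonneg hC1
  have hbpos : 0 < b m := by linarith
  -- key modulus inequality
  have key : ‖Complex.exp (-Complex.I * z m) * ((ω m : ℂ) + z m)‖
      < ‖(ω m : ℂ) - z m‖ := by
    have hlower : b m ≤ ‖(ω m : ℂ) - z m‖ := by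
      have him : ((ω m : ℂ) - z m).im = b m := by
        rw [hz m]; simp
      calc b m = |((ω m : ℂ) - z m).im| := by rw [him, abs_of_nonneg (hb m)]
        _ ≤ ‖(ω m : ℂ) - z m‖ := Complex.abs_im_le_norm _
    have hexp : ‖Complex.exp (-Complex.I * z m)‖ = Real.exp (-(b m)) := by
      rw [Complex.norm_exp]
      congr 1
      rw [hz m]; simp
    have hupper : ‖(ω m : ℂ) + z m‖ ≤ C * b m := by
      have hre : ((ω m : ℂ) + z m).re = ω m + a m := by rw [hz m]; simp
      have him : ((ω m : ℂ) + z m).im = -(b m) := by rw [hz m]; simp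
      have h1 : ‖(ω m : ℂ) + z m‖ ≤ ω m + a m + b m := by
        calc ‖(ω m : ℂ) + z m‖
            ≤ |((ω m : ℂ) + z m).re| + |((ω m : ℂ) + z m).im| :=
              Complex.norm_le_abs_re_add_abs_im _
          _ = ω m + a m + b m := by
              rw [hre, him, abs_of_nonneg (by linarith [hωpos m, ha m] : (0:ℝ) ≤ ω m + a m),
                abs_neg, abs_of_nonneg (hb m)]
      have hω_le : ω m ≤ (1 / c₁) * b m := by
        rw [div_mul_eq_mul_div, le_div_iff₀ hc₁, one_mul, mul_comm]
        exact hbc₁ m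
      have ha_le : a m ≤ (1 / c₂) * b m := by
        rw [div_mul_eq_mul_div, le_div_iff₀ hc₂, one_mul, mul_comm]
        exact hbc₂ m
      have hCb : C * b m = (1/c₁) * b m + (1/c₂) * b m + b m := by rw [hCdef]; ring
      linarith
    calc ‖Complex.exp (-Complex.I * z m) * ((ω m : ℂ) + z m)‖
        = Real.exp (-(b m)) * ‖(ω m : ℂ) + z m‖ := by
          rw [norm_mul, hexp]
      _ ≤ Real.exp (-(b m)) * (C * b m) := by
          exact mul_le_mul_of_nonneg_left hupper (Real.exp_pos _).le
      _ < b m := by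
          have hClt : C < Real.exp (b m) := by
            calc C = Real.exp (Real.log C) := (Real.exp_log hCpos).symm
              _ < Real.exp (b m) := Real.exp_lt_exp.mpr (by linarith)
          have : Real.exp (-(b m)) * C < 1 := by
            rw [Real.exp_neg]
            rw [inv_mul_lt_iff₀ (Real.exp_pos _), mul_one]
            exact hClt
          calc Real.exp (-(b m)) * (C * b m) = (Real.exp (-(b m)) * C) * b m := by ring
            _ < 1 * b m := by exact mul_lt_mul_of_pos_right this hbpos
            _ = b m := one_mul _
      _ ≤ ‖(ω m : ℂ) - z m‖ := hlower
  constructor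
  · intro h
    rw [h] at key
    exact lt_irrefl _ key
  · intro h
    rw [h] at key
    simp only [neg_mul, norm_neg] at key
    exact lt_irrefl _ key
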